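/- Let f be a positive function on ℝ such that f(x) ≤ M ψ(q₁ x) for all x ∈ ℝ, for some M > 0 and q₁ ∈ (0, 1]. Then for every q₂ ∈ (0,1) and every σ ∈ (0, 1 − q₂²): (K_σ f)(x) ≤ (2/√3) M ψ(q₁ q₂ x) for all x ∈ ℝ. -/

import Mathlib

open MeasureTheory

/-- The Gaussian kernel `ψ(x) = π^{-1/2} exp(-x²)`. -/
noncomputable def gaussK (x : ℝ) : ℝ := (Real.sqrt Real.pi)⁻¹ * Real.exp (-x ^ 2)

/-- The scaled Gaussian kernel `ψ_σ(x) = σ⁻¹ ψ(x/σ)`. -/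
noncomputable def gaussKs (σ x : ℝ) : ℝ := σ⁻¹ * gaussK (x / σ)

/-- Convolution with `ψ_σ` : `K_σ f`. -/
noncomputable def convK (σ : ℝ) (f : ℝ → ℝ) : ℝ → ℝ := fun x => ∫ u, f u * gaussKs σ (x - u)

/-- `i`-fold application of `K_σ`, with `K_σ^0 f = f`. -/
noncomputable def convKiter (σ : ℝ) (f : ℝ → ℝ) : ℕ → ℝ → ℝ
  | 0 => f
  | i + 1 => convK σ (convKiter σ f i)

/-- The iterates `f_0 = f`, `f_{j+1} = f - (K_σ f_j - f_j)`. -/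
noncomputable def iterF (σ : ℝ) (f : ℝ → ℝ) : ℕ → ℝ → ℝ
  | 0 => f
  | j + 1 => fun x => f x - (convK σ (iterF σ f j) x - iterF σ f j x)

/-- `J_{σ,k} = {x : f_k(x) > f(x)/2}`. -/
def Jset (σ : ℝ) (f : ℝ → ℝ) (k : ℕ) : Set ℝ := {x | f x / 2 < iterF σ f k x}

-- `g_k = f_k 1_{J_{σ,k}} + (f/2) 1_{J_{σ,k}^c}`
open Classical in
noncomputable def gFun (σ : ℝ) (f : ℝ → ℝ) (k : ℕ) : ℝ → ℝ :=
  fun x => if x ∈ Jset σ f k then iterF σ f k x else f x / 2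

/-- `h_k = g_k / ∫ g_k`. -/
noncomputable def hFun (σ : ℝ) (f : ℝ → ℝ) (k : ℕ) : ℝ → ℝ :=
  fun x => gFun σ f k x / ∫ u, gFun σ f k u

lemma gauss_shift_integrable {a : ℝ} (ha : 0 < a) (c : ℝ) :
    Integrable (fun u : ℝ => Real.exp (-(a * (u - c) ^ 2))) := by
  have := (integrable_exp_neg_mul_sq ha).comp_sub_right c
  simpa [neg_mul] using this

lemma gauss_shift_integral {a : ℝ} (ha : 0 < a) (c d : ℝ) :
    ∫ u : ℝ, Real.exp (-(a * (u - c) ^ 2 + d)) = Real.exp (-d) * Real.sqrt (Real.pi / a) := by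
  have h1 : ∀ u : ℝ, Real.exp (-(a * (u - c) ^ 2 + d))
      = Real.exp (-d) * Real.exp (-a * (u - c) ^ 2) := by
    intro u; rw [← Real.exp_add]; ring_nf
  simp_rw [h1]
  rw [integral_const_mul]
  have h2 : (∫ u : ℝ, Real.exp (-a * (u - c) ^ 2)) = ∫ u : ℝ, Real.exp (-a * u ^ 2) := by
    exact integral_sub_right_eq_self (fun u => Real.exp (-a * u ^ 2)) c
  rw [h2, integral_gaussian]

set_option maxHeartbeats 1000000 in
/-- Lemma 15: if `f ≤ M ψ(q₁ ·)` then for every `q₂ ∈ (0,1)` and every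
`σ ∈ (0, 1 − q₂²)`: `K_σ f ≤ (2/√3) M ψ(q₁ q₂ ·)`. -/
theorem stmt18 (f : ℝ → ℝ) (hf0 : ∀ x, 0 ≤ f x)
    (M q₁ : ℝ) (hM : 0 < M) (hq₁ : 0 < q₁) (hq₁' : q₁ ≤ 1)
    (hfM : ∀ x, f x ≤ M * gaussK (q₁ * x)) :
    ∀ q₂ : ℝ, 0 < q₂ → q₂ < 1 → ∀ σ : ℝ, 0 < σ → σ < 1 - q₂ ^ 2 → ∀ x : ℝ,
      convK σ f x ≤ 2 / Real.sqrt 3 * M * gaussK (q₁ * q₂ * x) := by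
  intro q₂ hq₂ hq₂' σ hσ hσ' x
  have hπ : (0:ℝ) < Real.pi := Real.pi_pos
  have hsπ : (0:ℝ) < Real.sqrt Real.pi := Real.sqrt_pos.2 hπ
  -- RHS is positive
  have hRHSpos : 0 < 2 / Real.sqrt 3 * M * gaussK (q₁ * q₂ * x) := by
    have h3 : (0:ℝ) < Real.sqrt 3 := Real.sqrt_pos.2 (by norm_num)
    have : 0 < gaussK (q₁ * q₂ * x) := by
      unfold gaussK; positivity
    positivity
  set a : ℝ := q₁ ^ 2 + (σ⁻¹) ^ 2 with ha_def
  have ha : 0 < a := by positivity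
  set c : ℝ := x / (a * σ ^ 2) with hc_def
  set d : ℝ := q₁ ^ 2 * x ^ 2 / (1 + q₁ ^ 2 * σ ^ 2) with hd_def
  have hden : (0:ℝ) < 1 + q₁ ^ 2 * σ ^ 2 := by positivity
  -- exponent identity
  have hexp : ∀ u : ℝ, (q₁ * u) ^ 2 + ((x - u) / σ) ^ 2 = a * (u - c) ^ 2 + d := by
    intro u
    rw [hc_def, hd_def, ha_def]
    field_simp
    ring
  -- pointwise formula for the dominating function
  have hgeq : ∀ u : ℝ, M * gaussK (q₁ * u) * gaussKs σ (x - u)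
      = (σ⁻¹ * Real.pi⁻¹ * M) * Real.exp (-(a * (u - c) ^ 2 + d)) := by
    intro u
    unfold gaussKs gaussK
    rw [← hexp u, neg_add, Real.exp_add]
    have hss : (Real.sqrt Real.pi)⁻¹ * (Real.sqrt Real.pi)⁻¹ = Real.pi⁻¹ := by
      rw [← mul_inv, Real.mul_self_sqrt hπ.le]
    linear_combination (M * Real.exp (-(q₁ * u) ^ 2) * σ⁻¹ *
      Real.exp (-((x - u) / σ) ^ 2)) * hss
  -- integrability of dominating function
  have hgint : Integrable (fun u => M * gaussK (q₁ * u) * gaussKs σ (x - u)) := by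
    have : Integrable (fun u : ℝ => (σ⁻¹ * Real.pi⁻¹ * M) *
        (Real.exp (-d) * Real.exp (-(a * (u - c) ^ 2)))) :=
      ((gauss_shift_integrable ha c).const_mul _).const_mul _
    refine this.congr (Filter.Eventually.of_forall fun u => ?_)
    simp only []
    rw [hgeq u, ← Real.exp_add]
    have : -d + -(a * (u - c) ^ 2) = -(a * (u - c) ^ 2 + d) := by ring
    rw [this]
  -- value of the dominating integral
  have hgval : (∫ u, M * gaussK (q₁ * u) * gaussKs σ (x - u))
      = (σ⁻¹ * Real.pi⁻¹ * M) * (Real.exp (-d) * Real.sqrt (Real.pi / a)) := by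
    simp_rw [hgeq]
    rw [integral_const_mul, gauss_shift_integral ha]
  -- step 1: convK ≤ dominating integral (or convK = 0)
  by_cases hint : Integrable (fun u => f u * gaussKs σ (x - u))
  · have hle : convK σ f x ≤ ∫ u, M * gaussK (q₁ * u) * gaussKs σ (x - u) := by
      unfold convK
      refine integral_mono hint hgint fun u => ?_
      have hks : 0 ≤ gaussKs σ (x - u) := by unfold gaussKs gaussK; positivity
      exact mul_le_mul_of_nonneg_right (hfM u) hks
    rw [hgval] at hle
    refine hle.trans ?_
    -- bound the constant: σ⁻¹π⁻¹√(π/a) ≤ (√π)⁻¹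
    have hσ2a : 1 ≤ σ ^ 2 * a := by
      rw [ha_def]
      have : σ ^ 2 * (q₁ ^ 2 + σ⁻¹ ^ 2) = q₁ ^ 2 * σ ^ 2 + 1 := by
        field_simp
      rw [this]; nlinarith
    have hK1 : σ⁻¹ * Real.pi⁻¹ * Real.sqrt (Real.pi / a) ≤ (Real.sqrt Real.pi)⁻¹ := by
      have e1 : σ⁻¹ * Real.pi⁻¹ * Real.sqrt (Real.pi / a)
          = Real.sqrt (σ⁻¹ ^ 2 * Real.pi⁻¹ ^ 2 * (Real.pi / a)) := by
        rw [Real.sqrt_mul (by positivity), Real.sqrt_mul (by positivity),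
          Real.sqrt_sq (by positivity), Real.sqrt_sq (by positivity)]
      have e2 : σ⁻¹ ^ 2 * Real.pi⁻¹ ^ 2 * (Real.pi / a) = (σ ^ 2 * a * Real.pi)⁻¹ := by
        field_simp
      rw [e1, e2, ← Real.sqrt_inv]
      apply Real.sqrt_le_sqrt
      rw [inv_le_inv₀ (by positivity) hπ]
      nlinarith
    -- bound the exponent: (q₁ q₂ x)² ≤ d
    have hdle : Real.exp (-d) ≤ Real.exp (-(q₁ * q₂ * x) ^ 2) := by
      apply Real.exp_le_exp.2
      rw [neg_le_neg_iff, hd_def, le_div_iff₀ hden]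
      have hσ1 : σ < 1 := by nlinarith [sq_nonneg q₂]
      have hkey : q₂ ^ 2 * (1 + q₁ ^ 2 * σ ^ 2) ≤ 1 := by
        have h1 : 0 ≤ (1 - q₂ ^ 2) * (q₁ * σ) ^ 2 :=
          mul_nonneg (by nlinarith) (sq_nonneg _)
        have h2 : 0 ≤ (1 - q₁ ^ 2) * σ ^ 2 :=
          mul_nonneg (by nlinarith) (sq_nonneg _)
        have h3 : 0 ≤ σ * (1 - σ) := mul_nonneg hσ.le (by linarith)
        nlinarith [h1, h2, h3]
      calc (q₁ * q₂ * x) ^ 2 * (1 + q₁ ^ 2 * σ ^ 2)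
          = (q₁ * x) ^ 2 * (q₂ ^ 2 * (1 + q₁ ^ 2 * σ ^ 2)) := by ring
        _ ≤ (q₁ * x) ^ 2 * 1 := mul_le_mul_of_nonneg_left hkey (sq_nonneg _)
        _ = q₁ ^ 2 * x ^ 2 := by ring
    -- 1 ≤ 2/√3
    have h3 : Real.sqrt 3 ≤ 2 := by
      rw [show (2:ℝ) = Real.sqrt 4 by
        rw [show (4:ℝ) = 2 ^ 2 by norm_num, Real.sqrt_sq (by norm_num)]]
      exact Real.sqrt_le_sqrt (by norm_num)
    have hs3 : (0:ℝ) < Real.sqrt 3 := Real.sqrt_pos.2 (by norm_num)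
    have h23 : (1:ℝ) ≤ 2 / Real.sqrt 3 := by
      rw [le_div_iff₀ hs3]; linarith
    unfold gaussK
    have lhs_le : σ⁻¹ * Real.pi⁻¹ * M * (Real.exp (-d) * Real.sqrt (Real.pi / a))
        ≤ M * ((Real.sqrt Real.pi)⁻¹ * Real.exp (-(q₁ * q₂ * x) ^ 2)) := by
      have h1 : σ⁻¹ * Real.pi⁻¹ * M * (Real.exp (-d) * Real.sqrt (Real.pi / a))
          = M * ((σ⁻¹ * Real.pi⁻¹ * Real.sqrt (Real.pi / a)) * Real.exp (-d)) := by ring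
      rw [h1]
      apply mul_le_mul_of_nonneg_left _ hM.le
      apply mul_le_mul hK1 hdle (Real.exp_pos _).le (by positivity)
    refine lhs_le.trans ?_
    have : M * ((Real.sqrt Real.pi)⁻¹ * Real.exp (-(q₁ * q₂ * x) ^ 2))
        = 1 * M * ((Real.sqrt Real.pi)⁻¹ * Real.exp (-(q₁ * q₂ * x) ^ 2)) := by ring
    rw [this]
    apply mul_le_mul_of_nonneg_right _ (by positivity)
    exact mul_le_mul_of_nonneg_right h23 hM.le
  · unfold convK
    rw [integral_undef hint]
    exact hRHSpos.le
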